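/- Let Γ be a simplicial abelian group. The universal principal twisted cartesian product total space W(Γ) is contractible: the functions h_{q-i} : W(Γ)_q → W(Γ)_{q+1} defined by h_{q-i}(x_q,…,x_0) = (0,…,0, ∂₀^{q-i}x_q + ⋯ + ∂₀x_{i+1} + x_i, x_{i-1},…,x_0) for 0 ≤ i ≤ q constitute a simplicial contraction of W(Γ) to the basepoint. -/

import Mathlib

universe u

/-- A combinatorial presentation of a simplicial set: a graded family of types
together with face operators `δ n i : obj (n+1) → obj n` and degeneracy operators
`σ n i : obj n → obj (n+1)` (defined for all `i : ℕ`; the simplicial identities are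
only required for indices in the valid range). -/
structure SData : Type (u+1) where
  obj : ℕ → Type u
  δ : (n : ℕ) → ℕ → obj (n+1) → obj n
  σ : (n : ℕ) → ℕ → obj n → obj (n+1)

namespace SData

/-- The simplicial identities. -/
structure IsSimplicial (X : SData.{u}) : Prop where
  δδ : ∀ (n i j : ℕ), i < j → j ≤ n + 2 → ∀ x : X.obj (n+2),
    X.δ n i (X.δ (n+1) j x) = X.δ n (j-1) (X.δ (n+1) i x)
  σσ : ∀ (n i j : ℕ), i ≤ j → j ≤ n → ∀ x : X.obj n,
    X.σ (n+1) i (X.σ n j x) = X.σ (n+1) (j+1) (X.σ n i x)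
  δσ_lt : ∀ (n i j : ℕ), i < j → j ≤ n + 1 → ∀ x : X.obj (n+1),
    X.δ (n+1) i (X.σ (n+1) j x) = X.σ n (j-1) (X.δ n i x)
  δσ_self : ∀ (n j : ℕ), j ≤ n → ∀ x : X.obj n, X.δ n j (X.σ n j x) = x
  δσ_succ : ∀ (n j : ℕ), j ≤ n → ∀ x : X.obj n, X.δ n (j+1) (X.σ n j x) = x
  δσ_gt : ∀ (n i j : ℕ), j + 1 < i → i ≤ n + 2 → ∀ x : X.obj (n+1),
    X.δ (n+1) i (X.σ (n+1) j x) = X.σ n j (X.δ n (i-1) x)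

/-- A simplex `x ∈ X_{n+1}` is degenerate if it is in the image of some degeneracy. -/
def Degenerate (X : SData.{u}) {n : ℕ} (x : X.obj (n+1)) : Prop :=
  ∃ i ≤ n, ∃ y : X.obj n, x = X.σ n i y

/-- Nondegeneracy (every `0`-simplex is nondegenerate). -/
def NonDeg (X : SData.{u}) : ∀ {n : ℕ}, X.obj n → Prop
  | 0, _ => True
  | _+1, x => ¬ X.Degenerate x

end SData

/-- A simplicial group structure: the underlying simplicial identities hold and all
face and degeneracy operators are group homomorphisms. -/
structure IsSGrp (Γ : SData.{u}) [∀ n, Group (Γ.obj n)] : Prop where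
  simp : Γ.IsSimplicial
  δ_mul : ∀ (n i : ℕ) (g h : Γ.obj (n+1)), Γ.δ n i (g * h) = Γ.δ n i g * Γ.δ n i h
  σ_mul : ∀ (n i : ℕ) (g h : Γ.obj n), Γ.σ n i (g * h) = Γ.σ n i g * Γ.σ n i h

/-- The Moore/Cartan twisting-function identities for a graded function
`τ : B_q → Γ_{q-1}` (here `τ q : B.obj (q+1) → Γ.obj q`). -/
structure IsTwisting (B Γ : SData.{u}) [∀ n, Group (Γ.obj n)]
    (τ : ∀ q, B.obj (q+1) → Γ.obj q) : Prop where
  d0 : ∀ (q : ℕ) (b : B.obj (q+2)),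
    Γ.δ q 0 (τ (q+1) b) = (τ q (B.δ (q+1) 0 b))⁻¹ * τ q (B.δ (q+1) 1 b)
  di : ∀ (q i : ℕ), 0 < i → i ≤ q + 1 → ∀ b : B.obj (q+2),
    Γ.δ q i (τ (q+1) b) = τ q (B.δ (q+1) (i+1) b)
  si : ∀ (q i : ℕ), i ≤ q → ∀ b : B.obj (q+1),
    Γ.σ q i (τ q b) = τ (q+1) (B.σ (q+1) (i+1) b)
  s0 : ∀ (q : ℕ) (b : B.obj q), τ q (B.σ q 0 b) = 1

/-- A group `π` regarded as a constant simplicial object. -/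
abbrev constS (π : Type u) : SData.{u} where
  obj _ := π
  δ _ _ x := x
  σ _ _ x := x

/-- A left simplicial action of a simplicial group `Γ` on `F`. -/
structure IsSimplicialAction (F Γ : SData.{u}) [∀ n, Group (Γ.obj n)]
    (act : ∀ n, Γ.obj n → F.obj n → F.obj n) : Prop where
  one_act : ∀ (n : ℕ) (f : F.obj n), act n 1 f = f
  mul_act : ∀ (n : ℕ) (g h : Γ.obj n) (f : F.obj n), act n (g * h) f = act n g (act n h f)
  act_δ : ∀ (n i : ℕ), i ≤ n + 1 → ∀ (g : Γ.obj (n+1)) (f : F.obj (n+1)),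
    F.δ n i (act (n+1) g f) = act n (Γ.δ n i g) (F.δ n i f)
  act_σ : ∀ (n i : ℕ), i ≤ n → ∀ (g : Γ.obj n) (f : F.obj n),
    F.σ n i (act n g f) = act (n+1) (Γ.σ n i g) (F.σ n i f)

/-- The twisted cartesian product `F ×_τ B`. -/
def TCP (F B Γ : SData.{u}) (act : ∀ n, Γ.obj n → F.obj n → F.obj n)
    (τ : ∀ q, B.obj (q+1) → Γ.obj q) : SData.{u} where
  obj n := F.obj n × B.obj n
  δ n i p :=
    if i = 0 then (act n (τ n p.2) (F.δ n 0 p.1), B.δ n 0 p.2)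
    else (F.δ n i p.1, B.δ n i p.2)
  σ n i p := (F.σ n i p.1, B.σ n i p.2)

/-- The classifying complex `W̄π` of a group `π`: `q`-simplices are `q`-tuples
`[x₁, …, x_q]` of elements of `π`. -/
def Wbar (π : Type u) [Group π] : SData.{u} where
  obj q := Fin q → π
  δ q i x := fun j =>
    if i = 0 then x j.succ
    else if (j : ℕ) + 1 < i then x j.castSucc
    else if (j : ℕ) + 1 = i then x j.castSucc * x j.succ
    else x j.succ
  σ q i x := fun j =>
    if h : (j : ℕ) < i ∧ (j : ℕ) < q then x ⟨j, h.2⟩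
    else if (j : ℕ) = i then 1
    else if h2 : 1 ≤ (j : ℕ) ∧ (j : ℕ) ≤ q then x ⟨(j : ℕ) - 1, by omega⟩
    else 1

/-- The canonical twisting function `τ(π) : W̄π → π`, `[x₁,…,x_q] ↦ x₁`. -/
def tauW (π : Type u) [Group π] : ∀ q, (Wbar π).obj (q+1) → π := fun _ x => x 0

/-- The simplicial map `θ(τ) : B → W̄π` associated to a twisting function `τ` with
values in a (constant) group `π`:
`θ(τ)(x) = [τ(x), τ(∂₀x), …, τ(∂₀^{q-1}x)]`. -/
def thetaF (B : SData.{u}) (π : Type u) [Group π] (τ : ∀ q, B.obj (q+1) → π) :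
    ∀ q, B.obj q → (Wbar π).obj q
  | 0, _ => Fin.elim0
  | q+1, x => Fin.cons (τ q x) (thetaF B π τ q (B.δ q 0 x))

/-- Compatibility of a family of candidate horn faces. -/
def HornCompatible (X : SData.{u}) (m k : ℕ) (y : ℕ → X.obj (m+1)) : Prop :=
  ∀ i j : ℕ, i < j → j ≤ m + 2 → i ≠ k → j ≠ k →
    X.δ m i (y j) = X.δ m (j-1) (y i)

/-- The Kan extension condition. -/
def IsKanComplex (X : SData.{u}) : Prop :=
  (∀ k ≤ 1, ∀ y : X.obj 0, ∃ x : X.obj 1, X.δ 0 (1 - k) x = y) ∧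
  (∀ (m k : ℕ), k ≤ m + 2 → ∀ y : ℕ → X.obj (m+1), HornCompatible X m k y →
    ∃ x : X.obj (m+2), ∀ i ≤ m + 2, i ≠ k → X.δ (m+1) i x = y i)

/-- The Kan fibration condition for a levelwise map `p : E → B`. -/
def IsKanFibration (E B : SData.{u}) (p : ∀ n, E.obj n → B.obj n) : Prop :=
  (∀ k ≤ 1, ∀ (y : E.obj 0) (b : B.obj 1), p 0 y = B.δ 0 (1 - k) b →
    ∃ x : E.obj 1, p 1 x = b ∧ E.δ 0 (1 - k) x = y) ∧
  (∀ (m k : ℕ), k ≤ m + 2 → ∀ (y : ℕ → E.obj (m+1)) (b : B.obj (m+2)),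
    HornCompatible E m k y → (∀ i ≤ m + 2, i ≠ k → p (m+1) (y i) = B.δ (m+1) i b) →
    ∃ x : E.obj (m+2), p (m+2) x = b ∧ ∀ i ≤ m + 2, i ≠ k → E.δ (m+1) i x = y i)

/-- A levelwise map of `SData`s is simplicial if it commutes with all faces and
degeneracies (in the valid range). -/
def IsSimplicialMap (X Y : SData.{u}) (f : ∀ n, X.obj n → Y.obj n) : Prop :=
  (∀ (n i : ℕ), i ≤ n + 1 → ∀ x : X.obj (n+1), f n (X.δ n i x) = Y.δ n i (f (n+1) x)) ∧
  (∀ (n i : ℕ), i ≤ n → ∀ x : X.obj n, f (n+1) (X.σ n i x) = Y.σ n i (f n x))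

variable (Γ : SData.{u}) [∀ n, AddCommGroup (Γ.obj n)]

/-- May's `W`-construction on a simplicial abelian group `Γ`:
`W(Γ)_q = Γ_q × Γ_{q-1} × ⋯ × Γ₀` (a `q`-simplex is the tuple `(x_q, …, x_0)`, recorded
as the dependent function `d ↦ x_d`). -/
def WC : SData.{u} where
  obj q := ∀ d : Fin (q+1), Γ.obj d
  δ q i x := fun d =>
    if q + 1 ≤ (d : ℕ) + i then Γ.δ d (i - (q - (d : ℕ))) (x d.succ)
    else if (d : ℕ) + i + 1 = q + 1 then
      Γ.δ d 0 (x d.succ) + x ⟨(d : ℕ), by have := d.isLt; omega⟩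
    else x ⟨(d : ℕ), by have := d.isLt; omega⟩
  σ q i x := fun d =>
    if h1 : q + 1 ≤ (d : ℕ) + i then
      if hd : 1 ≤ (d : ℕ) then
        cast (congrArg Γ.obj (by omega : (d : ℕ) - 1 + 1 = (d : ℕ)))
          (Γ.σ ((d : ℕ) - 1) (i - (q + 1 - (d : ℕ)))
            (x ⟨(d : ℕ) - 1, by have := d.isLt; omega⟩))
      else 0
    else if h2 : (d : ℕ) + i = q then 0
    else x ⟨(d : ℕ), by have := d.isLt; omega⟩

/-- Iterated `∂₀ : Γ_{i+m} → Γ_i`. -/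
def pow0 (i : ℕ) : ∀ m, Γ.obj (i + m) → Γ.obj i
  | 0, x => x
  | m+1, x => pow0 i m (Γ.δ (i+m) 0 x)

/-- The contracting functions `h_{q-i} : W(Γ)_q → W(Γ)_{q+1}`,
`h_{q-i}(x_q,…,x_0) = (0,…,0, ∂₀^{q-i}x_q + ⋯ + ∂₀x_{i+1} + x_i, x_{i-1},…,x_0)`
(here the second argument is the position index `i`, `0 ≤ i ≤ q`). -/
def hmap (q i : ℕ) (x : ∀ d : Fin (q+1), Γ.obj d) : ∀ d : Fin (q+2), Γ.obj d :=
  fun d =>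
    if h1 : (d : ℕ) < i ∧ (d : ℕ) ≤ q then x ⟨(d : ℕ), by omega⟩
    else if h2 : (d : ℕ) = i then
      cast (congrArg Γ.obj h2.symm)
        (∑ m ∈ Finset.range (q - i + 1),
          if hm : i + m ≤ q then pow0 Γ i m (x ⟨i + m, by omega⟩) else 0)
    else 0

namespace WAux

variable {Γ : SData.{u}} [∀ n, AddCommGroup (Γ.obj n)]

/-- Cast between components of `Γ`. -/
abbrev cst (Γ : SData.{u}) {a b : ℕ} (h : a = b) : Γ.obj a → Γ.obj b :=
  cast (congrArg Γ.obj h)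

omit [∀ n, AddCommGroup (Γ.obj n)] in
lemma cst_rfl {a : ℕ} (h : a = a) (x : Γ.obj a) : cst Γ h x = x := rfl

lemma cst_zero {a b : ℕ} (h : a = b) :
    cst Γ h (0 : Γ.obj a) = 0 := by subst h; rfl

omit [∀ n, AddCommGroup (Γ.obj n)] in
lemma cst_δ {a b : ℕ} (h : a + 1 = b + 1) (k : ℕ) (x : Γ.obj (a+1)) :
    Γ.δ b k (cst Γ h x) = cst Γ (by omega) (Γ.δ a k x) := by
  have h' : a = b := by omega
  subst h'; rfl

omit [∀ n, AddCommGroup (Γ.obj n)] in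
lemma x_cst {n a b : ℕ} (x : ∀ d : Fin n, Γ.obj d) (h : a = b) (ha : a < n) :
    cst Γ h (x ⟨a, ha⟩) = x ⟨b, h ▸ ha⟩ := by subst h; rfl

lemma δ_zero (hδ_add : ∀ (n i : ℕ) (x y : Γ.obj (n+1)), Γ.δ n i (x + y) = Γ.δ n i x + Γ.δ n i y)
    (n i : ℕ) : Γ.δ n i (0 : Γ.obj (n+1)) = 0 := by
  have h := hδ_add n i 0 0
  rw [add_zero] at h
  exact (left_eq_add.mp h)

lemma σ_zero (hσ_add : ∀ (n i : ℕ) (x y : Γ.obj n), Γ.σ n i (x + y) = Γ.σ n i x + Γ.σ n i y)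
    (n i : ℕ) : Γ.σ n i (0 : Γ.obj n) = 0 := by
  have h := hσ_add n i 0 0
  rw [add_zero] at h
  exact (left_eq_add.mp h)

lemma pow0_zero (hδ_add : ∀ (n i : ℕ) (x y : Γ.obj (n+1)), Γ.δ n i (x + y) = Γ.δ n i x + Γ.δ n i y)
    (i : ℕ) : ∀ m, pow0 Γ i m (0 : Γ.obj (i+m)) = 0
  | 0 => rfl
  | m+1 => by
    show pow0 Γ i m (Γ.δ (i+m) 0 0) = 0
    rw [δ_zero hδ_add, pow0_zero hδ_add i m]

lemma pow0_add (hδ_add : ∀ (n i : ℕ) (x y : Γ.obj (n+1)), Γ.δ n i (x + y) = Γ.δ n i x + Γ.δ n i y)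
    (i : ℕ) : ∀ m (x y : Γ.obj (i+m)),
    pow0 Γ i m (x + y) = pow0 Γ i m x + pow0 Γ i m y
  | 0, x, y => rfl
  | m+1, x, y => by
    show pow0 Γ i m (Γ.δ (i+m) 0 (x+y)) = _
    rw [hδ_add, pow0_add hδ_add i m]
    rfl

omit [∀ n, AddCommGroup (Γ.obj n)] in
/-- `∂₀^m ∂ₖ = ∂₀^{m+1}` for `k ≤ m`. -/
lemma pow0_δ_small (hΓ : Γ.IsSimplicial) (i : ℕ) : ∀ m k, k ≤ m → ∀ x : Γ.obj (i+m+1),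
    pow0 Γ i m (Γ.δ (i+m) k x) = pow0 Γ i (m+1) x
  | 0, 0, _, x => rfl
  | m+1, 0, _, x => rfl
  | m+1, k+1, hk, x => by
    show pow0 Γ i m (Γ.δ (i+m) 0 (Γ.δ (i+m+1) (k+1) x)) = _
    rw [hΓ.δδ (i+m) 0 (k+1) (by omega) (by omega) x]
    have h1 : (k+1) - 1 = k := rfl
    rw [h1, pow0_δ_small hΓ i m k (by omega) (Γ.δ (i+m+1) 0 x)]
    rfl

omit [∀ n, AddCommGroup (Γ.obj n)] in
/-- `∂₀^m ∂ₖ = ∂_{k-m} ∂₀^m` for `m ≤ k`. -/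
lemma pow0_δ_big (hΓ : Γ.IsSimplicial) (i : ℕ) : ∀ m k, m ≤ k → k ≤ i+m+1 → ∀ x : Γ.obj (i+m+1),
    pow0 Γ i m (Γ.δ (i+m) k x) =
      Γ.δ i (k-m) (pow0 Γ (i+1) m (cst Γ (by omega) x))
  | 0, k, _, _, x => rfl
  | m+1, k, hmk, hk, x => by
    show pow0 Γ i m (Γ.δ (i+m) 0 (Γ.δ (i+m+1) k x)) = _
    rw [hΓ.δδ (i+m) 0 k (by omega) (by omega) x]
    rw [pow0_δ_big hΓ i m (k-1) (by omega) (by omega) (Γ.δ (i+m+1) 0 x)]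
    show Γ.δ i (k-1-m) _ = Γ.δ i (k-(m+1)) (pow0 Γ (i+1) m (Γ.δ ((i+1)+m) 0 (cst Γ (by omega) x)))
    rw [show k-1-m = k-(m+1) from by omega]
    rw [cst_δ (by omega : (i+(m+1))+1 = ((i+1)+m)+1) 0 x]
    rfl

omit [∀ n, AddCommGroup (Γ.obj n)] in
/-- `∂₀^{m+1} σₖ = ∂₀^m` for `k ≤ m`. -/
lemma pow0_σ_small (hΓ : Γ.IsSimplicial) (i : ℕ) : ∀ m k, k ≤ m → ∀ x : Γ.obj (i+m),
    pow0 Γ i (m+1) (Γ.σ (i+m) k x) = pow0 Γ i m x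
  | 0, 0, _, x => by
    show Γ.δ i 0 (Γ.σ i 0 x) = x
    exact hΓ.δσ_self i 0 (by omega) x
  | m+1, 0, _, x => by
    show pow0 Γ i (m+1) (Γ.δ (i+m+1) 0 (Γ.σ (i+m+1) 0 x)) = _
    rw [hΓ.δσ_self (i+m+1) 0 (by omega) x]
  | m+1, k+1, hk, x => by
    show pow0 Γ i (m+1) (Γ.δ (i+m+1) 0 (Γ.σ (i+m+1) (k+1) x)) = _
    rw [hΓ.δσ_lt (i+m) 0 (k+1) (by omega) (by omega) x]
    have h1 : (k+1) - 1 = k := rfl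
    rw [h1, pow0_σ_small hΓ i m k (by omega) (Γ.δ (i+m) 0 x)]
    rfl

omit [∀ n, AddCommGroup (Γ.obj n)] in
/-- `∂₀^m σ_{m+c} = σ_c ∂₀^m`. -/
lemma pow0_σ_big (hΓ : Γ.IsSimplicial) (i : ℕ) : ∀ m c, c ≤ i → ∀ x : Γ.obj (i+m),
    pow0 Γ (i+1) m (cst Γ (by omega : (i+m)+1 = (i+1)+m) (Γ.σ (i+m) (m+c) x)) =
      Γ.σ i c (pow0 Γ i m x)
  | 0, c, _, x => by
    rw [cst_rfl, Nat.zero_add]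
    rfl
  | m+1, c, hc, x => by
    show pow0 Γ (i+1) m (Γ.δ ((i+1)+m) 0 (cst Γ (by omega) _)) = _
    rw [cst_δ (by omega : (i+(m+1))+1 = ((i+1)+m)+1) 0 _]
    have h2 : Γ.δ (i+(m+1)) 0 (Γ.σ (i+(m+1)) (m+1+c) x) = Γ.σ (i+m) (m+1+c-1) (Γ.δ (i+m) 0 x) :=
      hΓ.δσ_lt (i+m) 0 (m+1+c) (by omega) (by omega) x
    rw [h2]
    rw [show m+1+c-1 = m+c from by omega]
    rw [pow0_σ_big hΓ i m c hc (Γ.δ (i+m) 0 x)]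
    rfl

end WAux
namespace WAux

variable {Γ : SData.{u}} [∀ n, AddCommGroup (Γ.obj n)]

/-- The diagonal sum appearing in `hmap`. -/
def dsum (q i : ℕ) (x : ∀ d : Fin (q+1), Γ.obj d) : Γ.obj i :=
  ∑ m ∈ Finset.range (q - i + 1),
    if hm : i + m ≤ q then pow0 Γ i m (x ⟨i + m, by omega⟩) else 0

lemma hmap_apply_lt {q i d : ℕ} (hd : d < i) (hdq : d ≤ q) (x : ∀ e : Fin (q+1), Γ.obj e)
    (h : d < q+2) : hmap Γ q i x ⟨d, h⟩ = x ⟨d, by omega⟩ := by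
  simp only [hmap]
  rw [dif_pos ⟨hd, hdq⟩]

lemma hmap_apply_gt {q i d : ℕ} (hd : i < d) (x : ∀ e : Fin (q+1), Γ.obj e)
    (h : d < q+2) : hmap Γ q i x ⟨d, h⟩ = 0 := by
  simp only [hmap]
  rw [dif_neg (by omega), dif_neg (by omega)]

lemma hmap_apply_diag {q i : ℕ} (x : ∀ e : Fin (q+1), Γ.obj e) (h : i < q+2) :
    hmap Γ q i x ⟨i, h⟩ = dsum q i x := by
  simp only [hmap]
  rw [dif_neg (by omega), dif_pos trivial]
  rfl

lemma Wδ_apply_big {q i d : ℕ} (h : q+1 ≤ d+i) (x : ∀ e : Fin (q+2), Γ.obj e) (hd : d < q+1) :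
    (WC Γ).δ q i x ⟨d, hd⟩ = Γ.δ d (i-(q-d)) (x ⟨d+1, by omega⟩) := by
  simp only [WC]
  rw [if_pos h]
  rfl

lemma Wδ_apply_mid {q i d : ℕ} (h : d + i = q) (x : ∀ e : Fin (q+2), Γ.obj e) (hd : d < q+1) :
    (WC Γ).δ q i x ⟨d, hd⟩ = Γ.δ d 0 (x ⟨d+1, by omega⟩) + x ⟨d, by omega⟩ := by
  simp only [WC]
  rw [if_neg (by omega), if_pos (by omega)]
  rfl

lemma Wδ_apply_lt {q i d : ℕ} (h : d + i < q) (x : ∀ e : Fin (q+2), Γ.obj e) (hd : d < q+1) :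
    (WC Γ).δ q i x ⟨d, hd⟩ = x ⟨d, by omega⟩ := by
  simp only [WC]
  rw [if_neg (by omega), if_neg (by omega)]

lemma Wσ_apply_big {q i e : ℕ} (h : q+1 ≤ e+1+i) (x : ∀ d : Fin (q+1), Γ.obj d) (he : e+1 < q+2) :
    (WC Γ).σ q i x ⟨e+1, he⟩ = Γ.σ e (i-(q+1-(e+1))) (x ⟨e, by omega⟩) := by
  simp only [WC]
  rw [dif_pos h, dif_pos (by omega : 1 ≤ e+1)]
  rfl

lemma Wσ_apply_mid {q i d : ℕ} (h : d + i = q) (x : ∀ e : Fin (q+1), Γ.obj e) (hd : d < q+2) :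
    (WC Γ).σ q i x ⟨d, hd⟩ = 0 := by
  simp only [WC]
  rw [dif_neg (by omega), dif_pos h]

lemma Wσ_apply_lt {q i d : ℕ} (h : d + i < q) (x : ∀ e : Fin (q+1), Γ.obj e) (hd : d < q+2) :
    (WC Γ).σ q i x ⟨d, hd⟩ = x ⟨d, by omega⟩ := by
  simp only [WC]
  rw [dif_neg (by omega), dif_neg (by omega)]

section Sums
variable {M : Type*} [AddCommGroup M]

lemma sum_shift {N m₀ : ℕ} (hm : m₀ ≤ N) (A B : ℕ → M)
    (h1 : ∀ m < m₀, B m = A m) (h2 : B m₀ = A m₀ + A (m₀+1))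
    (h3 : ∀ m, m₀ < m → m ≤ N → B m = A (m+1)) :
    ∑ m ∈ Finset.range (N+1), B m = ∑ m ∈ Finset.range (N+2), A m := by
  induction N, hm using Nat.le_induction with
  | base =>
    rw [Finset.sum_range_succ, Finset.sum_range_succ, Finset.sum_range_succ (n := m₀),
      Finset.sum_congr rfl (fun m hmem => h1 m (Finset.mem_range.mp hmem)), h2]
    abel
  | succ N hN ih =>
    rw [Finset.sum_range_succ, ih (fun m hm1 hm2 => h3 m hm1 (by omega)),
      h3 (N+1) (by omega) (by omega), Finset.sum_range_succ (n := N+2)]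

lemma sum_shift' {N m₀ : ℕ} (hm : m₀ ≤ N) (A B : ℕ → M)
    (h1 : ∀ m < m₀, B m = A m) (h2 : B m₀ = 0)
    (h3 : ∀ m, m₀ < m → m ≤ N+1 → B m = A (m-1)) :
    ∑ m ∈ Finset.range (N+2), B m = ∑ m ∈ Finset.range (N+1), A m := by
  induction N, hm using Nat.le_induction with
  | base =>
    rw [Finset.sum_range_succ, Finset.sum_range_succ, Finset.sum_range_succ (n := m₀),
      Finset.sum_congr rfl (fun m hmem => h1 m (Finset.mem_range.mp hmem)), h2,
      h3 (m₀+1) (by omega) (by omega)]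
    simp
  | succ N hN ih =>
    rw [Finset.sum_range_succ, ih (fun m hm1 hm2 => h3 m hm1 (by omega)),
      h3 (N+2) (by omega) (by omega), Finset.sum_range_succ (n := N+1)]
    rfl

end Sums
end WAux
namespace WAux

variable {Γ : SData.{u}} [∀ n, AddCommGroup (Γ.obj n)]

lemma Wσ_apply_big' {q i d e : ℕ} (hde : d = e+1) (h : q+1 ≤ d+i)
    (x : ∀ f : Fin (q+1), Γ.obj f) (hd : d < q+2) :
    (WC Γ).σ q i x ⟨d, hd⟩ =
      cst Γ hde.symm (Γ.σ e (i-(q+1-d)) (x ⟨e, by omega⟩)) := by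
  subst hde
  rw [cst_rfl]
  exact Wσ_apply_big h x hd

/-- Core computation for `∂ᵢ h = h ∂ᵢ`, `i` small. -/
lemma dsum_δ0 (hΓ : Γ.IsSimplicial)
    (hδ_add : ∀ (n i : ℕ) (x y : Γ.obj (n+1)), Γ.δ n i (x + y) = Γ.δ n i x + Γ.δ n i y)
    (q p i : ℕ) (hpi : p + i ≤ q) (x : ∀ d : Fin (q+2), Γ.obj d) :
    dsum q p ((WC Γ).δ q i x) = dsum (q+1) p x := by
  unfold dsum
  rw [show (q+1)-p+1 = (q-p)+2 from by omega]
  refine sum_shift (by omega : q-p-i ≤ q-p) _ _ ?_ ?_ ?_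
  · intro m hm
    try dsimp only
    rw [dif_pos (by omega : p+m ≤ q), dif_pos (by omega : p+m ≤ q+1)]
    rw [Wδ_apply_lt (by omega) x]
  · try dsimp only
    rw [dif_pos (by omega : p+(q-p-i) ≤ q), dif_pos (by omega : p+(q-p-i) ≤ q+1),
      dif_pos (by omega : p+(q-p-i+1) ≤ q+1)]
    rw [Wδ_apply_mid (by omega) x]
    rw [pow0_add hδ_add]
    rw [add_comm]
    rfl
  · intro m hm1 hm2
    try dsimp only
    rw [dif_pos (by omega : p+m ≤ q), dif_pos (by omega : p+(m+1) ≤ q+1)]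
    rw [Wδ_apply_big (by omega) x]
    exact pow0_δ_small hΓ p m _ (by omega) _

/-- Core computation for `∂ᵢ h = h ∂_{i-1}`, `i` big. -/
lemma dsum_δ_big (hΓ : Γ.IsSimplicial)
    (hδ_add : ∀ (n i : ℕ) (x y : Γ.obj (n+1)), Γ.δ n i (x + y) = Γ.δ n i x + Γ.δ n i y)
    (q p c : ℕ) (hp : p ≤ q) (hc : 1 ≤ c) (hcp : c ≤ p+1) (x : ∀ d : Fin (q+2), Γ.obj d) :
    dsum q p ((WC Γ).δ q (c+(q-p)) x) = Γ.δ p c (dsum (q+1) (p+1) x) := by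
  unfold dsum
  rw [show (q+1)-(p+1)+1 = q-p+1 from by omega]
  have hmap_sum := map_sum (AddMonoidHom.mk' (Γ.δ p c) (hδ_add p c))
    (fun m => if hm : (p+1) + m ≤ q+1 then pow0 Γ (p+1) m (x ⟨(p+1) + m, by omega⟩) else 0)
    (Finset.range (q-p+1))
  rw [show Γ.δ p c (∑ m ∈ Finset.range (q-p+1),
      if hm : (p+1) + m ≤ q+1 then pow0 Γ (p+1) m (x ⟨(p+1) + m, by omega⟩) else 0) =
      ∑ m ∈ Finset.range (q-p+1), Γ.δ p c
        (if hm : (p+1) + m ≤ q+1 then pow0 Γ (p+1) m (x ⟨(p+1) + m, by omega⟩) else 0)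
    from hmap_sum]
  refine Finset.sum_congr rfl (fun m hmem => ?_)
  have hm : m ≤ q - p := by
    have := Finset.mem_range.mp hmem; omega
  rw [dif_pos (by omega : p+m ≤ q), dif_pos (by omega : (p+1)+m ≤ q+1)]
  rw [Wδ_apply_big (by omega) x]
  rw [show (c+(q-p))-(q-(p+m)) = c+m from by omega]
  rw [pow0_δ_big hΓ p m (c+m) (by omega) (by omega) _]
  rw [show c+m-m = c from by omega]
  rw [x_cst x (by omega : p+m+1 = (p+1)+m)]

/-- Core computation for `sᵢ h = h sᵢ`, `i` small. -/
lemma dsum_σ (hΓ : Γ.IsSimplicial)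
    (hδ_add : ∀ (n i : ℕ) (x y : Γ.obj (n+1)), Γ.δ n i (x + y) = Γ.δ n i x + Γ.δ n i y)
    (q p i : ℕ) (hpi : p + i ≤ q) (x : ∀ d : Fin (q+1), Γ.obj d) :
    dsum (q+1) p ((WC Γ).σ q i x) = dsum q p x := by
  unfold dsum
  rw [show (q+1)-p+1 = (q-p)+2 from by omega]
  refine sum_shift' (by omega : q-p-i ≤ q-p) _ _ ?_ ?_ ?_
  · intro m hm
    try dsimp only
    rw [dif_pos (by omega : p+m ≤ q+1), dif_pos (by omega : p+m ≤ q)]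
    rw [Wσ_apply_lt (by omega) x]
  · try dsimp only
    rw [dif_pos (by omega : p+(q-p-i) ≤ q+1)]
    rw [Wσ_apply_mid (by omega) x]
    exact pow0_zero hδ_add p _
  · intro m hm1 hm2
    obtain ⟨m', rfl⟩ : ∃ m', m = m'+1 := ⟨m-1, by omega⟩
    try dsimp only
    rw [dif_pos (by omega : p+(m'+1) ≤ q+1), dif_pos (by omega : p+(m'+1-1) ≤ q)]
    rw [Wσ_apply_big' (by omega : p+(m'+1) = (p+m')+1) (by omega) x]
    rw [cst_rfl]
    rw [show i-(q+1-(p+(m'+1))) = i-(q-p-m') from by omega]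
    exact pow0_σ_small hΓ p m' _ (by omega) _

/-- Core computation for `sᵢ h = h s_{i-1}`, `i` big. -/
lemma dsum_σ_big (hΓ : Γ.IsSimplicial)
    (hσ_add : ∀ (n i : ℕ) (x y : Γ.obj n), Γ.σ n i (x + y) = Γ.σ n i x + Γ.σ n i y)
    (q p c : ℕ) (hp : p ≤ q) (hcp : c ≤ p) (x : ∀ d : Fin (q+1), Γ.obj d) :
    dsum (q+1) (p+1) ((WC Γ).σ q (c+(q-p)) x) = Γ.σ p c (dsum q p x) := by
  unfold dsum
  rw [show (q+1)-(p+1)+1 = q-p+1 from by omega]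
  have hmap_sum := map_sum (AddMonoidHom.mk' (Γ.σ p c) (hσ_add p c))
    (fun m => if hm : p + m ≤ q then pow0 Γ p m (x ⟨p + m, by omega⟩) else 0)
    (Finset.range (q-p+1))
  rw [show Γ.σ p c (∑ m ∈ Finset.range (q-p+1),
      if hm : p + m ≤ q then pow0 Γ p m (x ⟨p + m, by omega⟩) else 0) =
      ∑ m ∈ Finset.range (q-p+1), Γ.σ p c
        (if hm : p + m ≤ q then pow0 Γ p m (x ⟨p + m, by omega⟩) else 0)
    from hmap_sum]
  refine Finset.sum_congr rfl (fun m hmem => ?_)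
  have hm : m ≤ q - p := by
    have := Finset.mem_range.mp hmem; omega
  rw [dif_pos (by omega : (p+1)+m ≤ q+1), dif_pos (by omega : p+m ≤ q)]
  rw [Wσ_apply_big' (by omega : (p+1)+m = (p+m)+1) (by omega) x]
  rw [show (c+(q-p))-(q+1-((p+1)+m)) = m+c from by omega]
  exact pow0_σ_big hΓ p m c hcp _

end WAux
namespace WAux

variable {Γ : SData.{u}} [∀ n, AddCommGroup (Γ.obj n)]

/-- Peeling the bottom term off a diagonal sum. -/
lemma dsum_step (hΓ : Γ.IsSimplicial)
    (hδ_add : ∀ (n i : ℕ) (x y : Γ.obj (n+1)), Γ.δ n i (x + y) = Γ.δ n i x + Γ.δ n i y)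
    (q p : ℕ) (hp : p < q) (x : ∀ d : Fin (q+1), Γ.obj d) :
    dsum q p x = Γ.δ p 0 (dsum q (p+1) x) + x ⟨p, by omega⟩ := by
  unfold dsum
  rw [show q-p+1 = (q-p-1+1)+1 from by omega]
  rw [Finset.sum_range_succ']
  have hmap_sum := map_sum (AddMonoidHom.mk' (Γ.δ p 0) (hδ_add p 0))
    (fun m => if hm : (p+1) + m ≤ q then pow0 Γ (p+1) m (x ⟨(p+1) + m, by omega⟩) else 0)
    (Finset.range (q-p-1+1))
  rw [show q-(p+1)+1 = q-p-1+1 from by omega]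
  rw [show Γ.δ p 0 (∑ m ∈ Finset.range (q-p-1+1),
      if hm : (p+1) + m ≤ q then pow0 Γ (p+1) m (x ⟨(p+1) + m, by omega⟩) else 0) =
      ∑ m ∈ Finset.range (q-p-1+1), Γ.δ p 0
        (if hm : (p+1) + m ≤ q then pow0 Γ (p+1) m (x ⟨(p+1) + m, by omega⟩) else 0)
    from hmap_sum]
  congr 1
  · refine Finset.sum_congr rfl (fun m hmem => ?_)
    have hm : m ≤ q - p - 1 := by
      have := Finset.mem_range.mp hmem; omega
    rw [dif_pos (by omega : p+(m+1) ≤ q), dif_pos (by omega : (p+1)+m ≤ q)]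
    rw [← pow0_δ_small hΓ p m m (le_refl m) (x ⟨p+(m+1), by omega⟩)]
    rw [pow0_δ_big hΓ p m m (le_refl m) (by omega)]
    rw [show m-m = 0 from by omega]
    rw [x_cst x (by omega : p+(m+1) = (p+1)+m)]
  · rw [dif_pos (by omega : p+0 ≤ q)]
    rfl

end WAux

open WAux

/-- For a simplicial abelian group `Γ`, the functions
`h_{q-i} : W(Γ)_q → W(Γ)_{q+1}` constitute a simplicial contraction of `W(Γ)` to the
basepoint: writing `h_j := h_{q-i}` with `j = q - i`, they satisfy the simplicial homotopy
identities with endpoints `∂₀ ∘ h₀ = id` and `∂_{q+1} ∘ h_q = 0` (the constant basepoint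
map). -/
theorem W_contractible
    (hΓ : Γ.IsSimplicial)
    (hδ_add : ∀ (n i : ℕ) (x y : Γ.obj (n+1)), Γ.δ n i (x + y) = Γ.δ n i x + Γ.δ n i y)
    (hσ_add : ∀ (n i : ℕ) (x y : Γ.obj n), Γ.σ n i (x + y) = Γ.σ n i x + Γ.σ n i y) :
    -- `∂₀ h₀ = id`:
    (∀ (q : ℕ) (x : (WC Γ).obj q), (WC Γ).δ q 0 (hmap Γ q q x) = x) ∧
    -- `∂_{q+1} h_q = 0` (the basepoint):
    (∀ (q : ℕ) (x : (WC Γ).obj q),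
      (WC Γ).δ q (q+1) (hmap Γ q 0 x) = fun d : Fin (q+1) => (0 : Γ.obj d)) ∧
    -- `∂ᵢ h_j = h_{j-1} ∂ᵢ` for `i < j`:
    (∀ (q i j : ℕ), i < j → j ≤ q + 1 → ∀ x : (WC Γ).obj (q+1),
      (WC Γ).δ (q+1) i (hmap Γ (q+1) (q+1-j) x) =
        hmap Γ q (q-(j-1)) ((WC Γ).δ q i x)) ∧
    -- `∂_{j+1} h_{j+1} = ∂_{j+1} h_j`:
    (∀ (q j : ℕ), j < q → ∀ x : (WC Γ).obj q,
      (WC Γ).δ q (j+1) (hmap Γ q (q-(j+1)) x) = (WC Γ).δ q (j+1) (hmap Γ q (q-j) x)) ∧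
    -- `∂ᵢ h_j = h_j ∂_{i-1}` for `i > j + 1`:
    (∀ (q i j : ℕ), j + 1 < i → i ≤ q + 2 → j ≤ q + 1 → ∀ x : (WC Γ).obj (q+1),
      (WC Γ).δ (q+1) i (hmap Γ (q+1) (q+1-j) x) = hmap Γ q (q-j) ((WC Γ).δ q (i-1) x)) ∧
    -- `sᵢ h_j = h_{j+1} sᵢ` for `i ≤ j`:
    (∀ (q i j : ℕ), i ≤ j → j ≤ q → ∀ x : (WC Γ).obj q,
      (WC Γ).σ (q+1) i (hmap Γ q (q-j) x) = hmap Γ (q+1) (q-j) ((WC Γ).σ q i x)) ∧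
    -- `sᵢ h_j = h_j s_{i-1}` for `i > j`:
    (∀ (q i j : ℕ), j < i → i ≤ q + 1 → j ≤ q → ∀ x : (WC Γ).obj q,
      (WC Γ).σ (q+1) i (hmap Γ q (q-j) x) = hmap Γ (q+1) (q+1-j) ((WC Γ).σ q (i-1) x)) := by
  refine ⟨?_, ?_, ?_, ?_, ?_, ?_, ?_⟩
  · -- ∂₀ h₀ = id
    intro q x
    funext d
    obtain ⟨dv, hdv⟩ := d
    rcases Nat.lt_trichotomy dv q with h|h|h
    · rw [Wδ_apply_lt (by omega) (hmap Γ q q x) hdv,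
        hmap_apply_lt (by omega) (by omega) x]
    · subst h
      rw [Wδ_apply_mid (by omega) (hmap Γ dv dv x) hdv,
        hmap_apply_gt (by omega) x, δ_zero hδ_add, zero_add, hmap_apply_diag x]
      unfold WAux.dsum
      rw [show dv-dv+1 = 1 from by omega, Finset.sum_range_one,
        dif_pos (by omega : dv+0 ≤ dv)]
      rfl
    · omega
  · -- ∂_{q+1} h_q = 0
    intro q x
    funext d
    obtain ⟨dv, hdv⟩ := d
    show (WC Γ).δ q (q+1) (hmap Γ q 0 x) ⟨dv, hdv⟩ = 0
    rw [Wδ_apply_big (by omega) (hmap Γ q 0 x) hdv,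
      hmap_apply_gt (by omega) x, δ_zero hδ_add]
  · -- ∂ᵢ h_j = h_{j-1} ∂ᵢ for i < j
    intro q i j hij hj x
    rw [show q-(j-1) = q+1-j from by omega]
    funext d
    obtain ⟨dv, hdv⟩ := d
    rcases Nat.lt_trichotomy dv (q+1-j) with h|h|h
    · rw [Wδ_apply_lt (by omega) (hmap Γ (q+1) (q+1-j) x) hdv,
        hmap_apply_lt h (by omega) x,
        hmap_apply_lt h (by omega) ((WC Γ).δ q i x),
        Wδ_apply_lt (by omega) x]
    · subst h
      rw [Wδ_apply_lt (by omega) (hmap Γ (q+1) (q+1-j) x) hdv,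
        hmap_apply_diag x, hmap_apply_diag ((WC Γ).δ q i x)]
      exact (dsum_δ0 hΓ hδ_add q (q+1-j) i (by omega) x).symm
    · rw [hmap_apply_gt h ((WC Γ).δ q i x)]
      rcases Nat.lt_trichotomy (dv+i) (q+1) with h2|h2|h2
      · rw [Wδ_apply_lt (by omega) (hmap Γ (q+1) (q+1-j) x) hdv,
          hmap_apply_gt h x]
      · rw [Wδ_apply_mid h2 (hmap Γ (q+1) (q+1-j) x) hdv,
          hmap_apply_gt (by omega) x, hmap_apply_gt (by omega) x,
          δ_zero hδ_add, add_zero]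
      · rw [Wδ_apply_big (by omega) (hmap Γ (q+1) (q+1-j) x) hdv,
          hmap_apply_gt (by omega) x, δ_zero hδ_add]
  · -- ∂_{j+1} h_{j+1} = ∂_{j+1} h_j
    intro q j hj x
    rw [show q-j = (q-(j+1))+1 from by omega]
    funext d
    obtain ⟨dv, hdv⟩ := d
    rcases Nat.lt_trichotomy dv (q-(j+1)) with h|h|h
    · rw [Wδ_apply_lt (by omega) (hmap Γ q (q-(j+1)) x) hdv,
        Wδ_apply_lt (by omega) (hmap Γ q ((q-(j+1))+1) x) hdv,
        hmap_apply_lt h (by omega) x,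
        hmap_apply_lt (by omega) (by omega) x]
    · subst h
      rw [Wδ_apply_mid (by omega) (hmap Γ q (q-(j+1)) x) hdv,
        Wδ_apply_mid (by omega) (hmap Γ q ((q-(j+1))+1) x) hdv,
        hmap_apply_gt (by omega) x, δ_zero hδ_add, zero_add,
        hmap_apply_diag x, hmap_apply_diag x,
        hmap_apply_lt (by omega) (by omega) x]
      exact dsum_step hΓ hδ_add q (q-(j+1)) (by omega) x
    · rw [Wδ_apply_big (by omega) (hmap Γ q (q-(j+1)) x) hdv,
        Wδ_apply_big (by omega) (hmap Γ q ((q-(j+1))+1) x) hdv,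
        hmap_apply_gt (by omega) x, hmap_apply_gt (by omega) x]
  · -- ∂ᵢ h_j = h_j ∂_{i-1} for i > j+1
    intro q i j hij hi hj x
    rw [show q+1-j = (q-j)+1 from by omega,
      show i-1 = (i-1-j)+(q-(q-j)) from by omega]
    funext d
    obtain ⟨dv, hdv⟩ := d
    rcases Nat.lt_trichotomy dv (q-j) with h|h|h
    · rw [hmap_apply_lt (by omega) (by omega) ((WC Γ).δ q ((i-1-j)+(q-(q-j))) x)]
      rcases Nat.lt_trichotomy (dv+i) (q+1) with h2|h2|h2
      · rw [Wδ_apply_lt (by omega) (hmap Γ (q+1) ((q-j)+1) x) hdv,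
          hmap_apply_lt (by omega) (by omega) x,
          Wδ_apply_lt (by omega) x]
      · rw [Wδ_apply_mid h2 (hmap Γ (q+1) ((q-j)+1) x) hdv,
          hmap_apply_lt (by omega) (by omega) x,
          hmap_apply_lt (by omega) (by omega) x,
          Wδ_apply_mid (by omega) x (by omega)]
      · rw [Wδ_apply_big (by omega) (hmap Γ (q+1) ((q-j)+1) x) hdv,
          hmap_apply_lt (by omega) (by omega) x,
          Wδ_apply_big (by omega) x (by omega),
          show i-(q+1-dv) = (i-1-j)+(q-(q-j))-(q-dv) from by omega]
    · subst h
      rw [Wδ_apply_big (by omega) (hmap Γ (q+1) ((q-j)+1) x) hdv,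
        hmap_apply_diag x,
        hmap_apply_diag ((WC Γ).δ q ((i-1-j)+(q-(q-j))) x),
        show i-(q+1-(q-j)) = i-1-j from by omega]
      exact (dsum_δ_big hΓ hδ_add q (q-j) (i-1-j) (by omega) (by omega) (by omega) x).symm
    · rw [hmap_apply_gt h ((WC Γ).δ q ((i-1-j)+(q-(q-j))) x),
        Wδ_apply_big (by omega) (hmap Γ (q+1) ((q-j)+1) x) hdv,
        hmap_apply_gt (by omega) x, δ_zero hδ_add]
  · -- sᵢ h_j = h_{j+1} sᵢ for i ≤ j
    intro q i j hij hj x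
    funext d
    obtain ⟨dv, hdv⟩ := d
    rcases Nat.lt_trichotomy dv (q-j) with h|h|h
    · rw [Wσ_apply_lt (by omega) (hmap Γ q (q-j) x) hdv,
        hmap_apply_lt h (by omega) x,
        hmap_apply_lt h (by omega) ((WC Γ).σ q i x),
        Wσ_apply_lt (by omega) x]
    · subst h
      rw [Wσ_apply_lt (by omega) (hmap Γ q (q-j) x) hdv,
        hmap_apply_diag x, hmap_apply_diag ((WC Γ).σ q i x)]
      exact (dsum_σ hΓ hδ_add q (q-j) i (by omega) x).symm
    · rw [hmap_apply_gt h ((WC Γ).σ q i x)]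
      rcases Nat.lt_trichotomy (dv+i) (q+1) with h2|h2|h2
      · rw [Wσ_apply_lt (by omega) (hmap Γ q (q-j) x) hdv,
          hmap_apply_gt h x]
      · rw [Wσ_apply_mid h2 (hmap Γ q (q-j) x) hdv]
      · rw [Wσ_apply_big' (by omega : dv = (dv-1)+1) (by omega) (hmap Γ q (q-j) x) hdv,
          hmap_apply_gt (by omega) x, σ_zero hσ_add, cst_zero]
  · -- sᵢ h_j = h_j s_{i-1} for i > j
    intro q i j hij hi hj x
    rw [show q+1-j = (q-j)+1 from by omega,
      show i-1 = (i-1-j)+(q-(q-j)) from by omega]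
    funext d
    obtain ⟨dv, hdv⟩ := d
    rcases Nat.lt_trichotomy dv ((q-j)+1) with h|h|h
    · rw [hmap_apply_lt h (by omega) ((WC Γ).σ q ((i-1-j)+(q-(q-j))) x)]
      rcases Nat.lt_trichotomy (dv+i) (q+1) with h2|h2|h2
      · rw [Wσ_apply_lt (by omega) (hmap Γ q (q-j) x) hdv,
          hmap_apply_lt (by omega) (by omega) x,
          Wσ_apply_lt (by omega) x]
      · rw [Wσ_apply_mid h2 (hmap Γ q (q-j) x) hdv,
          Wσ_apply_mid (by omega) x (by omega)]
      · rw [Wσ_apply_big' (by omega : dv = (dv-1)+1) (by omega) (hmap Γ q (q-j) x) hdv,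
          hmap_apply_lt (by omega) (by omega) x,
          Wσ_apply_big' (by omega : dv = (dv-1)+1) (by omega) x (by omega),
          show i-(q+1+1-dv) = (i-1-j)+(q-(q-j))-(q+1-dv) from by omega]
    · subst h
      rw [Wσ_apply_big' (rfl : (q-j)+1 = (q-j)+1) (by omega) (hmap Γ q (q-j) x) hdv,
        cst_rfl, hmap_apply_diag x,
        hmap_apply_diag ((WC Γ).σ q ((i-1-j)+(q-(q-j))) x),
        show i-(q+1+1-((q-j)+1)) = i-1-j from by omega]
      exact (dsum_σ_big hΓ hσ_add q (q-j) (i-1-j) (by omega) (by omega) x).symm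
    · rw [hmap_apply_gt h ((WC Γ).σ q ((i-1-j)+(q-(q-j))) x),
        Wσ_apply_big' (by omega : dv = (dv-1)+1) (by omega) (hmap Γ q (q-j) x) hdv,
        hmap_apply_gt (by omega) x, σ_zero hσ_add, cst_zero]
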